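/- Let E be an effect algebra and ∼ an effect algebra congruence on E. Then the quotient E/∼ with the induced partial operation is an effect algebra, and the quotient map a ↦ [a] is a full surjective morphism of effect algebras. -/
import Mathlib


/-- An effect algebra: a partial algebra `(α; ⊕, 0, 1)`.  The partial operation is
encoded by a total function `add` together with a definedness predicate `D`. -/
structure EffectAlgebra (α : Type*) where
  D : α → α → Prop
  add : α → α → α
  zero : α
  one : α
  comm_def : ∀ a b, D a b → D b a
  comm : ∀ a b, D a b → add a b = add b a
  assoc_def₁ : ∀ a b c, D a b → D (add a b) c → D b c
  assoc_def₂ : ∀ a b c, D a b → D (add a b) c → D a (add b c)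
  assoc : ∀ a b c, D a b → D (add a b) c → add (add a b) c = add a (add b c)
  orth_exists : ∀ a, ∃! b, D a b ∧ add a b = one
  add_one : ∀ a, D a one → a = zero

namespace EffectAlgebra

variable {α : Type*}
open Classical

/-- The induced order: `a ≤ b` iff `∃ c, a ⊕ c = b`. -/
def le (E : EffectAlgebra α) (a b : α) : Prop := ∃ c, E.D a c ∧ E.add a c = b

/-- The orthosupplement `a'`. -/
noncomputable def orth (E : EffectAlgebra α) (a : α) : α := (E.orth_exists a).choose

/-- Partial difference: `sub b a = b ⊖ a`, intended for `a ≤ b`. -/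
noncomputable def sub (E : EffectAlgebra α) (b a : α) : α :=
  if h : ∃ c, E.D a c ∧ E.add a c = b then h.choose else E.zero

end EffectAlgebra

namespace EffectAlgebra

variable {α : Type*}

lemma orth_def (E : EffectAlgebra α) (a : α) :
    E.D a (E.orth a) ∧ E.add a (E.orth a) = E.one :=
  (E.orth_exists a).choose_spec.1

lemma orth_unique (E : EffectAlgebra α) {a b : α} (h : E.D a b) (h2 : E.add a b = E.one) :
    b = E.orth a :=
  (E.orth_exists a).choose_spec.2 b ⟨h, h2⟩

lemma orth_one (E : EffectAlgebra α) : E.orth E.one = E.zero :=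
  E.add_one _ (E.comm_def _ _ (E.orth_def E.one).1)

lemma D_one_zero (E : EffectAlgebra α) :
    E.D E.one E.zero ∧ E.add E.one E.zero = E.one := by
  obtain ⟨h1, h2⟩ := E.orth_def E.one
  rw [E.orth_one] at h1 h2
  exact ⟨h1, h2⟩

lemma D_zero (E : EffectAlgebra α) (a : α) : E.D a E.zero := by
  obtain ⟨h1, h2⟩ := E.orth_def a
  have hc : E.D (E.orth a) a := E.comm_def _ _ h1
  have hs : E.add (E.orth a) a = E.one := by rw [← E.comm _ _ h1]; exact h2
  have hD : E.D (E.add (E.orth a) a) E.zero := by rw [hs]; exact E.D_one_zero.1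
  exact E.assoc_def₁ _ _ _ hc hD

lemma add_zero' (E : EffectAlgebra α) (a : α) : E.add a E.zero = a := by
  obtain ⟨h1, h2⟩ := E.orth_def a
  have hca : E.D (E.orth a) a := E.comm_def _ _ h1
  have hsum : E.add (E.orth a) a = E.one := by rw [← E.comm _ _ h1]; exact h2
  have hD0 : E.D (E.add (E.orth a) a) E.zero := by rw [hsum]; exact E.D_one_zero.1
  have hD2 : E.D (E.orth a) (E.add a E.zero) := E.assoc_def₂ _ _ _ hca hD0
  have he : E.add (E.orth a) (E.add a E.zero) = E.one := by
    rw [← E.assoc _ _ _ hca hD0, hsum]; exact E.D_one_zero.2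
  have h4 : E.add a E.zero = E.orth (E.orth a) := E.orth_unique hD2 he
  have h5 : a = E.orth (E.orth a) := E.orth_unique hca hsum
  rw [h4, ← h5]

lemma eq_zero_of_add (E : EffectAlgebra α) {x y : α} (h : E.D x y)
    (h2 : E.add x y = E.zero) : x = E.zero := by
  have hD1 : E.D (E.add x y) E.one := by
    rw [h2]; exact E.comm_def _ _ E.D_one_zero.1
  have hy : y = E.zero := E.add_one _ (E.assoc_def₁ _ _ _ h hD1)
  rw [hy] at h2
  rw [← h2, E.add_zero']

lemma orth_add (E : EffectAlgebra α) {a b : α} (h : E.D a b) :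
    E.D b (E.orth (E.add a b)) ∧ E.add b (E.orth (E.add a b)) = E.orth a := by
  obtain ⟨h1, h2⟩ := E.orth_def (E.add a b)
  have hbt : E.D b (E.orth (E.add a b)) := E.assoc_def₁ _ _ _ h h1
  have hD : E.D a (E.add b (E.orth (E.add a b))) := E.assoc_def₂ _ _ _ h h1
  have he : E.add a (E.add b (E.orth (E.add a b))) = E.one := by
    rw [← E.assoc _ _ _ h h1]; exact h2
  exact ⟨hbt, E.orth_unique hD he⟩

end EffectAlgebra

section Quot

variable {α : Type*} (E : EffectAlgebra α) (r : α → α → Prop) (hr : Equivalence r)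

/-- Representatives relate to the class of an element. -/
lemma rout (a : α) : r ((Quotient.mk (Setoid.mk r hr) a).out) a :=
  Quotient.exact ((Quotient.mk (Setoid.mk r hr) a).out_eq)

/-- The induced definedness predicate on the quotient. -/
def QD (x y : Quotient (Setoid.mk r hr)) : Prop :=
  ∃ a₁ b₁ : α, r a₁ x.out ∧ r b₁ y.out ∧ E.D a₁ b₁

open Classical in
/-- The induced partial addition on the quotient. -/
noncomputable def Qadd (x y : Quotient (Setoid.mk r hr)) :
    Quotient (Setoid.mk r hr) :=
  if h : QD E r hr x y then
    Quotient.mk (Setoid.mk r hr) (E.add h.choose h.choose_spec.choose)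
  else Quotient.mk (Setoid.mk r hr) E.zero

lemma Qadd_eq (hC2 : ∀ a₁ a₂ b₁ b₂ : α, r a₁ a₂ → r b₁ b₂ → E.D a₁ b₁ → E.D a₂ b₂ →
      r (E.add a₁ b₁) (E.add a₂ b₂)) {x y : Quotient (Setoid.mk r hr)} {a₁ b₁ : α}
    (ha : r a₁ x.out) (hb : r b₁ y.out) (hD : E.D a₁ b₁) :
    Qadd E r hr x y = Quotient.mk (Setoid.mk r hr) (E.add a₁ b₁) := by
  have h : QD E r hr x y := ⟨a₁, b₁, ha, hb, hD⟩
  rw [Qadd, dif_pos h]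
  have ha₂ : r h.choose x.out := h.choose_spec.choose_spec.1
  have hb₂ : r h.choose_spec.choose y.out := h.choose_spec.choose_spec.2.1
  have hD₂ : E.D h.choose h.choose_spec.choose := h.choose_spec.choose_spec.2.2
  exact Quotient.sound (hC2 _ _ _ _ (hr.trans ha₂ (hr.symm ha))
    (hr.trans hb₂ (hr.symm hb)) hD₂ hD)

lemma QD_mk (a b : α) :
    QD E r hr (Quotient.mk (Setoid.mk r hr) a) (Quotient.mk (Setoid.mk r hr) b) ↔
      ∃ a₁ b₁ : α, r a₁ a ∧ r b₁ b ∧ E.D a₁ b₁ := by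
  constructor
  · rintro ⟨a₁, b₁, ha, hb, hD⟩
    exact ⟨a₁, b₁, hr.trans ha (rout r hr a), hr.trans hb (rout r hr b), hD⟩
  · rintro ⟨a₁, b₁, ha, hb, hD⟩
    exact ⟨a₁, b₁, hr.trans ha (hr.symm (rout r hr a)),
      hr.trans hb (hr.symm (rout r hr b)), hD⟩

include hr in
lemma orth_of_add_one
    (hC2 : ∀ a₁ a₂ b₁ b₂ : α, r a₁ a₂ → r b₁ b₂ → E.D a₁ b₁ → E.D a₂ b₂ →
      r (E.add a₁ b₁) (E.add a₂ b₂))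
    (hC6 : ∀ a b : α, r a b → r (E.orth a) (E.orth b))
    {a b : α} (hD : E.D a b) (h1 : r (E.add a b) E.one) : r b (E.orth a) := by
  obtain ⟨ht, hs⟩ := E.orth_add hD
  have h0 : r (E.orth (E.add a b)) E.zero := by
    have := hC6 _ _ h1
    rwa [E.orth_one] at this
  have h2 : r (E.add b (E.orth (E.add a b))) (E.add b E.zero) :=
    hC2 _ _ _ _ (hr.refl b) h0 ht (E.D_zero b)
  rw [hs, E.add_zero'] at h2
  exact hr.symm h2

/-- Associativity bundle on the quotient. -/
lemma Qassoc
    (hC2 : ∀ a₁ a₂ b₁ b₂ : α, r a₁ a₂ → r b₁ b₂ → E.D a₁ b₁ → E.D a₂ b₂ →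
      r (E.add a₁ b₁) (E.add a₂ b₂))
    (hC5 : ∀ a b c : α, E.D b c → r a (E.add b c) →
      ∃ b₁ c₁ : α, r b₁ b ∧ r c₁ c ∧ E.D b₁ c₁ ∧ a = E.add b₁ c₁)
    (x y z : Quotient (Setoid.mk r hr)) (h1 : QD E r hr x y)
    (h2 : QD E r hr (Qadd E r hr x y) z) :
    QD E r hr y z ∧ QD E r hr x (Qadd E r hr y z) ∧
      Qadd E r hr (Qadd E r hr x y) z = Qadd E r hr x (Qadd E r hr y z) := by
  obtain ⟨a₁, b₁, ha, hb, hD⟩ := h1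
  have hxy : Qadd E r hr x y = Quotient.mk (Setoid.mk r hr) (E.add a₁ b₁) :=
    Qadd_eq E r hr hC2 ha hb hD
  obtain ⟨s, c₁, hs, hc, hDs⟩ := h2
  have hs' : r s (E.add a₁ b₁) := by
    refine hr.trans hs ?_
    rw [hxy]; exact rout r hr _
  obtain ⟨a₂, b₂, ha₂, hb₂, hD₂, hseq⟩ := hC5 s a₁ b₁ hD hs'
  rw [hseq] at hDs
  have hDbc : E.D b₂ c₁ := E.assoc_def₁ _ _ _ hD₂ hDs
  have hQyz : QD E r hr y z :=
    ⟨b₂, c₁, hr.trans hb₂ hb, hc, hDbc⟩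
  have hyz : Qadd E r hr y z = Quotient.mk (Setoid.mk r hr) (E.add b₂ c₁) :=
    Qadd_eq E r hr hC2 (hr.trans hb₂ hb) hc hDbc
  have hDa : E.D a₂ (E.add b₂ c₁) := E.assoc_def₂ _ _ _ hD₂ hDs
  have hbc_out : r (E.add b₂ c₁) ((Qadd E r hr y z).out) := by
    rw [hyz]; exact hr.symm (rout r hr _)
  refine ⟨hQyz, ⟨a₂, E.add b₂ c₁, hr.trans ha₂ ha, hbc_out, hDa⟩, ?_⟩
  have hL : Qadd E r hr (Qadd E r hr x y) z
      = Quotient.mk (Setoid.mk r hr) (E.add (E.add a₂ b₂) c₁) := by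
    refine Qadd_eq E r hr hC2 ?_ hc hDs
    rw [← hseq]; exact hs
  have hR : Qadd E r hr x (Qadd E r hr y z)
      = Quotient.mk (Setoid.mk r hr) (E.add a₂ (E.add b₂ c₁)) :=
    Qadd_eq E r hr hC2 (hr.trans ha₂ ha) hbc_out hDa
  rw [hL, hR, E.assoc _ _ _ hD₂ hDs]

open Classical in
/-- The quotient effect algebra. -/
noncomputable def Qalg
    (hC2 : ∀ a₁ a₂ b₁ b₂ : α, r a₁ a₂ → r b₁ b₂ → E.D a₁ b₁ → E.D a₂ b₂ →
      r (E.add a₁ b₁) (E.add a₂ b₂))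
    (hC5 : ∀ a b c : α, E.D b c → r a (E.add b c) →
      ∃ b₁ c₁ : α, r b₁ b ∧ r c₁ c ∧ E.D b₁ c₁ ∧ a = E.add b₁ c₁)
    (hC6 : ∀ a b : α, r a b → r (E.orth a) (E.orth b)) :
    EffectAlgebra (Quotient (Setoid.mk r hr)) where
  D := QD E r hr
  add := Qadd E r hr
  zero := Quotient.mk (Setoid.mk r hr) E.zero
  one := Quotient.mk (Setoid.mk r hr) E.one
  comm_def := by
    rintro x y ⟨a₁, b₁, ha, hb, hD⟩
    exact ⟨b₁, a₁, hb, ha, E.comm_def _ _ hD⟩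
  comm := by
    rintro x y ⟨a₁, b₁, ha, hb, hD⟩
    rw [Qadd_eq E r hr hC2 ha hb hD,
      Qadd_eq E r hr hC2 hb ha (E.comm_def _ _ hD), E.comm _ _ hD]
  assoc_def₁ := fun x y z h1 h2 => (Qassoc E r hr hC2 hC5 x y z h1 h2).1
  assoc_def₂ := fun x y z h1 h2 => (Qassoc E r hr hC2 hC5 x y z h1 h2).2.1
  assoc := fun x y z h1 h2 => (Qassoc E r hr hC2 hC5 x y z h1 h2).2.2
  orth_exists := by
    intro x
    refine ⟨Quotient.mk (Setoid.mk r hr) (E.orth x.out), ⟨?_, ?_⟩, ?_⟩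
    · exact ⟨x.out, E.orth x.out, hr.refl _, hr.symm (rout r hr _),
        (E.orth_def x.out).1⟩
    · rw [Qadd_eq E r hr hC2 (hr.refl x.out) (hr.symm (rout r hr _))
        (E.orth_def x.out).1, (E.orth_def x.out).2]
    · rintro y ⟨⟨a₁, b₁, ha, hb, hD⟩, hsum⟩
      have hsum' : Qadd E r hr x y = Quotient.mk (Setoid.mk r hr) (E.add a₁ b₁) :=
        Qadd_eq E r hr hC2 ha hb hD
      have h1 : r (E.add a₁ b₁) E.one := Quotient.exact (hsum'.symm.trans hsum)
      have h2 : r b₁ (E.orth a₁) := orth_of_add_one E r hr hC2 hC6 hD h1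
      have h3 : r b₁ (E.orth x.out) := hr.trans h2 (hC6 _ _ ha)
      have h4 : Quotient.mk (Setoid.mk r hr) b₁ = y := by
        rw [← y.out_eq]; exact Quotient.sound hb
      rw [← h4]
      exact Quotient.sound h3
  add_one := by
    rintro x ⟨a₁, b₁, ha, hb, hD⟩
    have hb1 : r b₁ E.one := hr.trans hb (rout r hr _)
    obtain ⟨ht, hs⟩ := E.orth_add (E.comm_def _ _ hD)
    have h0 : r (E.orth b₁) E.zero := by
      have := hC6 _ _ hb1; rwa [E.orth_one] at this
    have h1 : r (E.add a₁ (E.orth (E.add b₁ a₁))) E.zero := by rw [hs]; exact h0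
    obtain ⟨a₂, t₂, ha₂, _, hD₂, heq⟩ := hC5 E.zero a₁ _ ht (hr.symm h1)
    have ha₂0 : a₂ = E.zero := E.eq_zero_of_add hD₂ heq.symm
    rw [ha₂0] at ha₂
    have : r a₁ E.zero := hr.symm ha₂
    rw [← x.out_eq]
    exact Quotient.sound (hr.trans (hr.symm ha) this)

end Quot

/-- the quotient of an effect algebra by an effect algebra congruence is an
effect algebra, and the quotient map is a full surjective morphism of effect algebras. -/
theorem stmt6 {α : Type*} (E : EffectAlgebra α) (r : α → α → Prop)
    (hr : Equivalence r)
    (hC2 : ∀ a₁ a₂ b₁ b₂ : α, r a₁ a₂ → r b₁ b₂ → E.D a₁ b₁ → E.D a₂ b₂ →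
      r (E.add a₁ b₁) (E.add a₂ b₂))
    (hC5 : ∀ a b c : α, E.D b c → r a (E.add b c) →
      ∃ b₁ c₁ : α, r b₁ b ∧ r c₁ c ∧ E.D b₁ c₁ ∧ a = E.add b₁ c₁)
    (hC6 : ∀ a b : α, r a b → r (E.orth a) (E.orth b)) :
    let mk : α → Quotient (Setoid.mk r hr) := Quotient.mk (Setoid.mk r hr)
    ∃ Q : EffectAlgebra (Quotient (Setoid.mk r hr)),
      -- Q carries the induced partial operation
      (∀ a b : α, Q.D (mk a) (mk b) ↔ ∃ a₁ b₁ : α, r a₁ a ∧ r b₁ b ∧ E.D a₁ b₁) ∧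
      Q.one = mk E.one ∧ Q.zero = mk E.zero ∧
      -- the quotient map is a morphism of effect algebras
      (∀ a b : α, E.D a b → Q.D (mk a) (mk b) ∧ Q.add (mk a) (mk b) = mk (E.add a b)) ∧
      -- it is surjective
      Function.Surjective mk ∧
      -- and it is full
      (∀ a b : α, Q.D (mk a) (mk b) →
        ∃ a₁ b₁ : α, mk a₁ = mk a ∧ mk b₁ = mk b ∧ E.D a₁ b₁) := by
  intro mk
  refine ⟨Qalg E r hr hC2 hC5 hC6, ?_, rfl, rfl, ?_, ?_, ?_⟩
  · exact QD_mk E r hr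
  · intro a b h
    refine ⟨(QD_mk E r hr a b).mpr ⟨a, b, hr.refl a, hr.refl b, h⟩, ?_⟩
    exact Qadd_eq E r hr hC2 (hr.symm (rout r hr a)) (hr.symm (rout r hr b)) h
  · exact fun x => ⟨x.out, x.out_eq⟩
  · intro a b h
    obtain ⟨a₁, b₁, ha, hb, hD⟩ := (QD_mk E r hr a b).mp h
    exact ⟨a₁, b₁, Quotient.sound ha, Quotient.sound hb, hD⟩
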